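/- Let α_A, α_B, α₁₁, α₁₂, α₂₁, α₂₂ ≥ 0 be real numbers satisfying α_B·α₂₁ < 1 and α_A·α₁₂ + (α_A·α_B·α₁₁·α₂₂)/(1 - α_B·α₂₁) < 1. Suppose nonnegative reals E₁, E₂ (representing truncated norms ‖e₁‖_T, ‖e₂‖_T) satisfy E₁ ≤ U₁ + α_A(U_A + α₁₂E₁ + α₂₂E₂ + β) and E₂ ≤ U₂ + α_B(U_B + α₁₁E₁ + α₂₁E₂ + β') for some nonnegative constants U₁, U₂, U_A, U_B, β, β'. Then E₁ is bounded above by a constant depending only on U₁, U₂, U_A, U_B, β, β' and the gains (in particular E₁ ≤ δ₂ / (1 - α_A·α₁₂ - α_Aα_Bα₁₁α₂₂/(1-α_Bα₂₁)) for an explicit δ₂). -/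

import Mathlib

/-- Core algebraic step of the three-block small-gain criterion: under the
small-gain conditions, the truncated norm `E₁` of the first internal error
signal is bounded by the explicit constant
`δ₂ / (1 - α_A α₁₂ - α_A α_B α₁₁ α₂₂/(1-α_B α₂₁))`, where
`δ₁ = U₂ + α_B (U_B + β')` and `δ₂ = U₁ + α_A (U_A + β + α₂₂ δ₁/(1-α_B α₂₁))`. -/
theorem stmt_7 (αA αB α11 α12 α21 α22 : ℝ)
    (hαA : 0 ≤ αA) (hαB : 0 ≤ αB) (h11 : 0 ≤ α11) (h12 : 0 ≤ α12)
    (h21 : 0 ≤ α21) (h22 : 0 ≤ α22)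
    (hB : αB * α21 < 1)
    (hsg : αA * α12 + αA * αB * α11 * α22 / (1 - αB * α21) < 1)
    (E₁ E₂ U₁ U₂ UA UB β β' : ℝ)
    (hE₁0 : 0 ≤ E₁) (hE₂0 : 0 ≤ E₂) (hU₁ : 0 ≤ U₁) (hU₂ : 0 ≤ U₂)
    (hUA : 0 ≤ UA) (hUB : 0 ≤ UB) (hβ : 0 ≤ β) (hβ' : 0 ≤ β')
    (hE₁ : E₁ ≤ U₁ + αA * (UA + α12 * E₁ + α22 * E₂ + β))
    (hE₂ : E₂ ≤ U₂ + αB * (UB + α11 * E₁ + α21 * E₂ + β')) :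
    E₁ ≤ (U₁ + αA * (UA + β + α22 * (U₂ + αB * (UB + β')) / (1 - αB * α21))) /
      (1 - αA * α12 - αA * αB * α11 * α22 / (1 - αB * α21)) := by
  have hd : 0 < 1 - αB * α21 := by linarith
  have hc : 0 < 1 - αA * α12 - αA * αB * α11 * α22 / (1 - αB * α21) := by linarith
  rw [le_div_iff₀ hc]
  rw [← mul_le_mul_iff_of_pos_right hd]
  have h1 : (E₁ * (1 - αA * α12 - αA * αB * α11 * α22 / (1 - αB * α21))) * (1 - αB * α21)
      = E₁ * ((1 - αA * α12) * (1 - αB * α21) - αA * αB * α11 * α22) := by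
    field_simp
    try ring
  have h2 : (U₁ + αA * (UA + β + α22 * (U₂ + αB * (UB + β')) / (1 - αB * α21))) * (1 - αB * α21)
      = (U₁ + αA * (UA + β)) * (1 - αB * α21) + αA * α22 * (U₂ + αB * (UB + β')) := by
    field_simp
    try ring
  rw [h1, h2]
  nlinarith [mul_nonneg (mul_nonneg hαA h22) hE₂0, mul_nonneg hαA h22,
    mul_le_mul_of_nonneg_left hE₂ (mul_nonneg hαA h22),
    mul_le_mul_of_nonneg_left hE₁ hd.le]
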